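/- Let L be a closed subspace of a Hilbert space E, let a : E → E be a bounded invertible operator with bounded inverse, and suppose closed subspaces L_N converge to L (projections converge strongly). Assume a maps each L_N and L to closed subspaces and a L_N, aL are closed. If additionally (aL)^⊥ = (a*)⁻¹(L^⊥) and similarly for L_N, then aL_N → aL. -/

import Mathlib

open Filter
open scoped InnerProductSpace

section Aux
variable {E : Type*} [NormedAddCommGroup E] [InnerProductSpace ℂ E] [CompleteSpace E]

lemma aux_inner (T : E →L[ℂ] E) (hT : IsSelfAdjoint T) (x y : E) :
    ⟪T x, y⟫_ℂ = ⟪x, T y⟫_ℂ := by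
  conv_lhs => rw [← hT.adjoint_eq]
  exact ContinuousLinearMap.adjoint_inner_left T y x

lemma aux_fix (T : E →L[ℂ] E) (hTi : T ∘L T = T) {y : E}
    (hy : y ∈ LinearMap.range (T : E →ₗ[ℂ] E)) : T y = y := by
  obtain ⟨u, rfl⟩ := hy
  have := congrArg (fun S : E →L[ℂ] E => S u) hTi
  simpa using this

lemma aux_norm (T : E →L[ℂ] E) (hT : IsSelfAdjoint T) (hTi : T ∘L T = T) (x : E) :
    ‖T x‖ ≤ ‖x‖ := by
  have h1 : ⟪T x, T x⟫_ℂ = ⟪x, T x⟫_ℂ := by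
    rw [aux_inner T hT x (T x)]
    congr 1
    have := congrArg (fun S : E →L[ℂ] E => S x) hTi
    simpa using this
  have h2 : (‖T x‖ : ℝ) ^ 2 = RCLike.re ⟪x, T x⟫_ℂ := by
    rw [← h1]
    simpa using (inner_self_eq_norm_sq (𝕜 := ℂ) (T x)).symm
  have h3 : RCLike.re ⟪x, T x⟫_ℂ ≤ ‖x‖ * ‖T x‖ := by
    calc RCLike.re ⟪x, T x⟫_ℂ ≤ ‖⟪x, T x⟫_ℂ‖ := RCLike.re_le_norm _
      _ ≤ ‖x‖ * ‖T x‖ := norm_inner_le_norm x (T x)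
  nlinarith [norm_nonneg (T x), norm_nonneg x]

end Aux

theorem stmt12 {E : Type*} [NormedAddCommGroup E] [InnerProductSpace ℂ E] [CompleteSpace E]
    (a : E ≃L[ℂ] E) (L : Submodule ℂ E) (LN : ℕ → Submodule ℂ E)
    (hL : IsClosed (L : Set E)) (hLN : ∀ n, IsClosed ((LN n : Submodule ℂ E) : Set E))
    (haL : IsClosed ((L.map ((a : E →L[ℂ] E) : E →ₗ[ℂ] E) : Submodule ℂ E) : Set E))
    (haLN : ∀ n, IsClosed (((LN n).map ((a : E →L[ℂ] E) : E →ₗ[ℂ] E) : Submodule ℂ E) : Set E))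
    (P : E →L[ℂ] E) (PN : ℕ → E →L[ℂ] E) (Q : E →L[ℂ] E) (QN : ℕ → E →L[ℂ] E)
    (hP : IsSelfAdjoint P) (hPi : P ∘L P = P) (hPr : LinearMap.range (P : E →ₗ[ℂ] E) = L)
    (hPN : ∀ n, IsSelfAdjoint (PN n)) (hPNi : ∀ n, PN n ∘L PN n = PN n)
    (hPNr : ∀ n, LinearMap.range (PN n : E →ₗ[ℂ] E) = LN n)
    (hQ : IsSelfAdjoint Q) (hQi : Q ∘L Q = Q)
    (hQr : LinearMap.range (Q : E →ₗ[ℂ] E) = L.map ((a : E →L[ℂ] E) : E →ₗ[ℂ] E))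
    (hQN : ∀ n, IsSelfAdjoint (QN n)) (hQNi : ∀ n, QN n ∘L QN n = QN n)
    (hQNr : ∀ n, LinearMap.range (QN n : E →ₗ[ℂ] E) = (LN n).map ((a : E →L[ℂ] E) : E →ₗ[ℂ] E))
    (hadj : (L.map ((a : E →L[ℂ] E) : E →ₗ[ℂ] E))ᗮ
      = Lᗮ.comap ((ContinuousLinearMap.adjoint (a : E →L[ℂ] E)) : E →ₗ[ℂ] E))
    (hadjN : ∀ n, ((LN n).map ((a : E →L[ℂ] E) : E →ₗ[ℂ] E))ᗮ
      = (LN n)ᗮ.comap ((ContinuousLinearMap.adjoint (a : E →L[ℂ] E)) : E →ₗ[ℂ] E))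
    (hconv : ∀ x : E, Tendsto (fun n => PN n x) atTop (nhds (P x))) :
    ∀ x : E, Tendsto (fun n => QN n x) atTop (nhds (Q x)) := by
  -- Step 1: on aL, QN n y → y
  have key1 : ∀ y ∈ L.map ((a : E →L[ℂ] E) : E →ₗ[ℂ] E),
      Tendsto (fun n => QN n y) atTop (nhds y) := by
    intro y hy
    obtain ⟨u, hu, rfl⟩ := hy
    have hPu : P u = u := by
      apply aux_fix P hPi
      rw [hPr]; exact hu
    rw [tendsto_iff_norm_sub_tendsto_zero]
    have hbound : ∀ n, ‖QN n ((a : E →L[ℂ] E) u) - (a : E →L[ℂ] E) u‖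
        ≤ 2 * ‖(a : E →L[ℂ] E) (PN n u) - (a : E →L[ℂ] E) u‖ := by
      intro n
      set v := (a : E →L[ℂ] E) (PN n u) with hv
      have hvmem : v ∈ LinearMap.range (QN n : E →ₗ[ℂ] E) := by
        rw [hQNr n]
        exact ⟨PN n u, by rw [← hPNr n]; exact ⟨u, rfl⟩, rfl⟩
      have hQv : QN n v = v := aux_fix (QN n) (hQNi n) hvmem
      have : QN n ((a : E →L[ℂ] E) u) - (a : E →L[ℂ] E) u
          = QN n ((a : E →L[ℂ] E) u - v) + (v - (a : E →L[ℂ] E) u) := by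
        rw [map_sub, hQv]; abel
      rw [this]
      calc ‖QN n ((a : E →L[ℂ] E) u - v) + (v - (a : E →L[ℂ] E) u)‖
          ≤ ‖QN n ((a : E →L[ℂ] E) u - v)‖ + ‖v - (a : E →L[ℂ] E) u‖ := norm_add_le _ _
        _ ≤ ‖(a : E →L[ℂ] E) u - v‖ + ‖v - (a : E →L[ℂ] E) u‖ := by
            exact add_le_add_left (aux_norm (QN n) (hQN n) (hQNi n) _) _
        _ = 2 * ‖v - (a : E →L[ℂ] E) u‖ := by rw [norm_sub_rev]; ring
    refine squeeze_zero (fun n => norm_nonneg _) hbound ?_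
    have h1 : Tendsto (fun n => (a : E →L[ℂ] E) (PN n u)) atTop
        (nhds ((a : E →L[ℂ] E) u)) := by
      have := ((a : E →L[ℂ] E).continuous.tendsto (P u)).comp (hconv u)
      rw [hPu] at this
      exact this
    have h2 : Tendsto (fun n => ‖(a : E →L[ℂ] E) (PN n u) - (a : E →L[ℂ] E) u‖)
        atTop (nhds 0) := tendsto_iff_norm_sub_tendsto_zero.mp h1
    simpa using (h2.const_mul (2:ℝ))
  -- Step 2: on (aL)ᗮ, QN n z → 0
  have key2 : ∀ z ∈ (L.map ((a : E →L[ℂ] E) : E →ₗ[ℂ] E))ᗮ,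
      Tendsto (fun n => QN n z) atTop (nhds 0) := by
    intro z hz
    have hastar : ContinuousLinearMap.adjoint (a : E →L[ℂ] E) z ∈ Lᗮ := by
      rw [hadj] at hz
      exact hz
    have hPaz : P (ContinuousLinearMap.adjoint (a : E →L[ℂ] E) z) = 0 := by
      set w := ContinuousLinearMap.adjoint (a : E →L[ℂ] E) z
      have h0 : ⟪P w, P w⟫_ℂ = ⟪w, P (P w)⟫_ℂ := aux_inner P hP w (P w)
      have hPP : P (P w) = P w := by
        have := congrArg (fun S : E →L[ℂ] E => S w) hPi
        simpa using this
      rw [hPP] at h0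
      have hPwL : P w ∈ L := by rw [← hPr]; exact ⟨w, rfl⟩
      have h4 : ⟪P w, w⟫_ℂ = 0 := (Submodule.mem_orthogonal L w).mp hastar (P w) hPwL
      have h5 : ⟪w, P w⟫_ℂ = 0 := by rw [← inner_conj_symm, h4, map_zero]
      rw [h5] at h0
      exact inner_self_eq_zero.mp h0
    rw [tendsto_iff_norm_sub_tendsto_zero]
    simp only [sub_zero]
    have hbound : ∀ n, ‖QN n z‖ ^ 2
        ≤ ‖PN n (ContinuousLinearMap.adjoint (a : E →L[ℂ] E) z)‖
          * (‖(a.symm : E →L[ℂ] E)‖ * ‖z‖) := by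
      intro n
      set w := ContinuousLinearMap.adjoint (a : E →L[ℂ] E) z
      -- QN n z ∈ a L_N:
      have hmem : QN n z ∈ (LN n).map ((a : E →L[ℂ] E) : E →ₗ[ℂ] E) := by
        rw [← hQNr n]; exact ⟨z, rfl⟩
      obtain ⟨un, hun, huneq⟩ := hmem
      have hQz : QN n (QN n z) = QN n z := by
        have := congrArg (fun S : E →L[ℂ] E => S z) (hQNi n)
        simpa using this
      have hPNun : PN n un = un := by
        apply aux_fix (PN n) (hPNi n); rw [hPNr n]; exact hun
      have hcalc : (‖QN n z‖ : ℝ) ^ 2 = RCLike.re ⟪PN n w, un⟫_ℂ := by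
        have e1 : ⟪QN n z, QN n z⟫_ℂ = ⟪z, QN n z⟫_ℂ := by
          rw [aux_inner (QN n) (hQN n) z (QN n z), hQz]
        have e2 : ⟪z, QN n z⟫_ℂ = ⟪w, un⟫_ℂ := by
          rw [← huneq]
          exact (ContinuousLinearMap.adjoint_inner_left (a : E →L[ℂ] E) un z).symm
        have e3 : ⟪w, un⟫_ℂ = ⟪PN n w, un⟫_ℂ := by
          rw [aux_inner (PN n) (hPN n) w un, hPNun]
        have h6 := (inner_self_eq_norm_sq (𝕜 := ℂ) (QN n z)).symm
        rw [e1, e2, e3] at h6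
        rw [h6]
      have hunnorm : ‖un‖ ≤ ‖(a.symm : E →L[ℂ] E)‖ * ‖z‖ := by
        have he : un = (a.symm : E →L[ℂ] E) (QN n z) := by
          simpa using congrArg a.symm huneq
        rw [he]
        calc ‖(a.symm : E →L[ℂ] E) (QN n z)‖
            ≤ ‖(a.symm : E →L[ℂ] E)‖ * ‖QN n z‖ := (a.symm : E →L[ℂ] E).le_opNorm _
          _ ≤ ‖(a.symm : E →L[ℂ] E)‖ * ‖z‖ := by
              exact mul_le_mul_of_nonneg_left (aux_norm (QN n) (hQN n) (hQNi n) z)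
                (norm_nonneg _)
      calc (‖QN n z‖ : ℝ) ^ 2 = RCLike.re ⟪PN n w, un⟫_ℂ := hcalc
        _ ≤ ‖⟪PN n w, un⟫_ℂ‖ := RCLike.re_le_norm _
        _ ≤ ‖PN n w‖ * ‖un‖ := norm_inner_le_norm _ _
        _ ≤ ‖PN n w‖ * (‖(a.symm : E →L[ℂ] E)‖ * ‖z‖) := by
            exact mul_le_mul_of_nonneg_left hunnorm (norm_nonneg _)
    have hlim : Tendsto (fun n => ‖PN n (ContinuousLinearMap.adjoint (a : E →L[ℂ] E) z)‖
        * (‖(a.symm : E →L[ℂ] E)‖ * ‖z‖)) atTop (nhds 0) := by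
      have := (tendsto_iff_norm_sub_tendsto_zero.mp
        (hconv (ContinuousLinearMap.adjoint (a : E →L[ℂ] E) z)))
      rw [hPaz] at this
      simp only [sub_zero] at this
      simpa using this.mul_const (‖(a.symm : E →L[ℂ] E)‖ * ‖z‖)
    have hsq : Tendsto (fun n => ‖QN n z‖ ^ 2) atTop (nhds 0) :=
      squeeze_zero (fun n => sq_nonneg _) hbound hlim
    have := hsq.sqrt
    simp only [Real.sqrt_zero] at this
    refine this.congr fun n => ?_
    rw [Real.sqrt_sq (norm_nonneg _)]
  -- Conclusion
  intro x
  have hQx : Q x ∈ L.map ((a : E →L[ℂ] E) : E →ₗ[ℂ] E) := by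
    rw [← hQr]; exact ⟨x, rfl⟩
  have hperp : x - Q x ∈ (L.map ((a : E →L[ℂ] E) : E →ₗ[ℂ] E))ᗮ := by
    rw [Submodule.mem_orthogonal]
    intro w hw
    have hQw : Q w = w := by apply aux_fix Q hQi; rw [hQr]; exact hw
    have : ⟪w, x - Q x⟫_ℂ = ⟪Q w, x - Q x⟫_ℂ := by rw [hQw]
    rw [this, aux_inner Q hQ w (x - Q x), map_sub]
    have hQQ : Q (Q x) = Q x := by
      have := congrArg (fun S : E →L[ℂ] E => S x) hQi
      simpa using this
    rw [hQQ, sub_self, inner_zero_right]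
  have h1 := key1 (Q x) hQx
  have h2 := key2 (x - Q x) hperp
  have := h1.add h2
  rw [add_zero] at this
  refine this.congr fun n => ?_
  rw [← map_add]
  congr 1
  abel
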